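/- Let D be a negative integer and let λ₁, λ₂ be the roots of an irreducible (over ℚ(√D)) quadratic x² + (a+b√D)x + (c+d√D) = 0 with a,b,c,d ∈ ℚ, and let ζ₁, ζ₂ be the roots of its Galois-conjugate quadratic x² + (a−b√D)x + (c−d√D) = 0. If λ₁ = ζ₁^α ζ₂^β for some integers α, β with |α+β| > 1, then λ₁λ₂ is a root of unity. -/

import Mathlib

def memQ (s w : ℂ) : Prop := ∃ x y : ℚ, w = (x : ℂ) + (y : ℂ) * s

section aux
variable {D : ℤ} {s : ℂ} (hD : D < 0) (hs2 : s ^ 2 = (D : ℂ))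

lemma memQ_add {w1 w2 : ℂ} (h1 : memQ s w1) (h2 : memQ s w2) : memQ s (w1 + w2) := by
  obtain ⟨x, y, rfl⟩ := h1; obtain ⟨u, v, rfl⟩ := h2
  exact ⟨x + u, y + v, by push_cast; ring⟩

lemma memQ_neg {w : ℂ} (h : memQ s w) : memQ s (-w) := by
  obtain ⟨x, y, rfl⟩ := h; exact ⟨-x, -y, by push_cast; ring⟩

include hs2 in
lemma memQ_mul {w1 w2 : ℂ} (h1 : memQ s w1) (h2 : memQ s w2) : memQ s (w1 * w2) := by
  obtain ⟨x, y, rfl⟩ := h1; obtain ⟨u, v, rfl⟩ := h2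
  refine ⟨x * u + y * v * D, x * v + y * u, ?_⟩
  push_cast
  linear_combination ((y : ℂ) * v) * hs2

lemma memQ_one : memQ s 1 := ⟨1, 0, by push_cast; ring⟩

include hD hs2 in
lemma memQ_inv {w : ℂ} (hw : w ≠ 0) (h : memQ s w) : memQ s w⁻¹ := by
  obtain ⟨x, y, rfl⟩ := h
  have hDq : (D : ℚ) < 0 := by exact_mod_cast hD
  have hK : x ^ 2 - y ^ 2 * D ≠ 0 := by
    intro h0
    have hx : x = 0 := by nlinarith [sq_nonneg x, sq_nonneg y]
    have hy2 : y ^ 2 * (D : ℚ) = 0 := by nlinarith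
    have hy : y = 0 := by
      have := (mul_eq_zero.mp hy2).resolve_right (ne_of_lt hDq)
      exact pow_eq_zero_iff (n := 2) (by norm_num) |>.mp this
    exact hw (by rw [hx, hy]; push_cast; ring)
  have hKC : ((x : ℂ) ^ 2 - (y : ℂ) ^ 2 * (D : ℂ)) ≠ 0 := by
    intro h0; apply hK; exact_mod_cast h0
  refine ⟨x / (x ^ 2 - y ^ 2 * D), -y / (x ^ 2 - y ^ 2 * D), ?_⟩
  rw [eq_comm]
  apply eq_inv_of_mul_eq_one_left
  push_cast
  field_simp
  linear_combination (-(y : ℂ) ^ 2) * hs2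

include hD hs2 in
lemma memQ_zpow {w : ℂ} (hw : w ≠ 0) (h : memQ s w) (n : ℤ) : memQ s (w ^ n) := by
  have hpow : ∀ k : ℕ, memQ s (w ^ k) := by
    intro k
    induction k with
    | zero => simpa using memQ_one (s := s)
    | succ k ih => rw [pow_succ]; exact memQ_mul hs2 ih h
  rcases n with n | n
  · simpa using hpow n
  · rw [zpow_negSucc]
    exact memQ_inv hD hs2 (pow_ne_zero _ hw) (hpow (n + 1))

include hs2 in
lemma memQ_sum_pow {z1 z2 : ℂ} (h1 : memQ s (z1 + z2)) (h2 : memQ s (z1 * z2)) :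
    ∀ k : ℕ, memQ s (z1 ^ k + z2 ^ k) := by
  intro k
  induction k using Nat.twoStepInduction with
  | zero => simpa using memQ_add memQ_one (memQ_one (s := s))
  | one => simpa using h1
  | more k ih1 ih2 =>
    have key : z1 ^ (k + 2) + z2 ^ (k + 2) =
        (z1 + z2) * (z1 ^ (k + 1) + z2 ^ (k + 1)) + (-(z1 * z2)) * (z1 ^ k + z2 ^ k) := by
      ring
    rw [key]
    exact memQ_add (memQ_mul hs2 h1 ih2) (memQ_mul hs2 (memQ_neg h2) ih1)

include hD hs2 in
lemma memQ_sym {z1 z2 : ℂ} (hz1 : z1 ≠ 0) (hz2 : z2 ≠ 0)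
    (h1 : memQ s (z1 + z2)) (h2 : memQ s (z1 * z2)) (α β : ℤ) :
    memQ s (z1 ^ α * z2 ^ β + z1 ^ β * z2 ^ α) := by
  -- wlog α ≤ β
  have main : ∀ α β : ℤ, α ≤ β → memQ s (z1 ^ α * z2 ^ β + z1 ^ β * z2 ^ α) := by
    intro α β hle
    obtain ⟨k, hβ⟩ : ∃ k : ℕ, β = α + (k : ℤ) :=
      ⟨(β - α).toNat, by rw [Int.toNat_of_nonneg (by omega)]; ring⟩
    have key : z1 ^ α * z2 ^ β + z1 ^ β * z2 ^ α
        = (z1 * z2) ^ α * (z1 ^ k + z2 ^ k) := by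
      subst hβ
      rw [zpow_add₀ hz1, zpow_add₀ hz2, mul_zpow, zpow_natCast, zpow_natCast]
      ring
    rw [key]
    exact memQ_mul hs2 (memQ_zpow hD hs2 (mul_ne_zero hz1 hz2) h2 α) (memQ_sum_pow hs2 h1 h2 k)
  rcases le_total α β with hle | hle
  · exact main α β hle
  · have := main β α hle
    rwa [add_comm] at this

end aux
theorem stmt_5 (D : ℤ) (hD : D < 0) (a b c d : ℚ) (l1 l2 z1 z2 : ℂ)
    (s : ℂ) (hs : s = (Real.sqrt (-(D : ℝ)) : ℝ) * Complex.I)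
    (hirr : ∀ w : ℂ, (∃ x y : ℚ, w = (x : ℂ) + (y : ℂ) * s) →
      w ^ 2 + ((a : ℂ) + (b : ℂ) * s) * w + ((c : ℂ) + (d : ℂ) * s) ≠ 0)
    (hv1 : l1 + l2 = -((a : ℂ) + (b : ℂ) * s)) (hv2 : l1 * l2 = (c : ℂ) + (d : ℂ) * s)
    (hw1 : z1 + z2 = -((a : ℂ) - (b : ℂ) * s)) (hw2 : z1 * z2 = (c : ℂ) - (d : ℂ) * s)
    (α β : ℤ) (hab : 1 < |α + β|) (hpow : l1 = z1 ^ α * z2 ^ β) :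
    ∃ n : ℕ, 0 < n ∧ (l1 * l2) ^ n = 1 := by
  -- basic facts about s
  have hs2 : s ^ 2 = (D : ℂ) := by
    rw [hs]
    have h0 : (0 : ℝ) ≤ -(D : ℝ) := by
      have : (D : ℝ) < 0 := by exact_mod_cast hD
      linarith
    rw [mul_pow, Complex.I_sq, ← Complex.ofReal_pow, Real.sq_sqrt h0]
    push_cast
    ring
  -- c + d s ≠ 0
  have hcd : (c : ℂ) + (d : ℂ) * s ≠ 0 := by
    have := hirr 0 ⟨0, 0, by push_cast; ring⟩
    intro h; apply this; rw [h]; ring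
  -- c - d s ≠ 0
  have hcd' : (c : ℂ) - (d : ℂ) * s ≠ 0 := by
    intro h
    have hdq : ((c : ℂ)) = (d : ℂ) * s := by linear_combination h
    have hsq : ((c ^ 2 : ℚ) : ℂ) = ((d ^ 2 * D : ℚ) : ℂ) := by
      push_cast
      linear_combination ((c:ℂ) + (d:ℂ)*s) * hdq + (d:ℂ)^2 * hs2
    have hq : (c ^ 2 : ℚ) = d ^ 2 * D := by exact_mod_cast hsq
    have hDq : (D : ℚ) < 0 := by exact_mod_cast hD
    have hc : c = 0 := by nlinarith [sq_nonneg c, sq_nonneg d]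
    have hd : d = 0 := by
      have hd2 : d ^ 2 * (D : ℚ) = 0 := by rw [← hq, hc]; ring
      have := (mul_eq_zero.mp hd2).resolve_right (ne_of_lt hDq)
      exact pow_eq_zero_iff (n := 2) (by norm_num) |>.mp this
    apply hcd
    rw [hc, hd]; push_cast; ring
  have hzz : z1 * z2 ≠ 0 := by rw [hw2]; exact hcd'
  have hz1 : z1 ≠ 0 := fun h => hzz (by rw [h, zero_mul])
  have hz2 : z2 ≠ 0 := fun h => hzz (by rw [h, mul_zero])
  -- membership facts
  have hmzz : memQ s (z1 * z2) := ⟨c, -d, by push_cast; linear_combination hw2⟩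
  have hmzs : memQ s (z1 + z2) := ⟨-a, b, by push_cast; linear_combination hw1⟩
  have hme : memQ s (z1 ^ α * z2 ^ β + z1 ^ β * z2 ^ α) :=
    memQ_sym hD hs2 hz1 hz2 hmzs hmzz α β
  have hmp : memQ s ((z1 * z2) ^ (α + β)) := memQ_zpow hD hs2 hzz hmzz (α + β)
  -- l1 satisfies both quadratics
  have hq1 : l1 ^ 2 + ((a : ℂ) + (b : ℂ) * s) * l1 + ((c : ℂ) + (d : ℂ) * s) = 0 := by
    linear_combination l1 * hv1 - hv2
  have hprod : z1 ^ α * z2 ^ β * (z1 ^ β * z2 ^ α) = (z1 * z2) ^ (α + β) := by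
    rw [mul_zpow, zpow_add₀ hz1, zpow_add₀ hz2]
    ring
  have hq2 : l1 ^ 2 - (z1 ^ α * z2 ^ β + z1 ^ β * z2 ^ α) * l1 + (z1 * z2) ^ (α + β) = 0 := by
    rw [hpow]
    linear_combination -hprod
  -- the linear coefficient difference must vanish
  have he' : (z1 ^ α * z2 ^ β + z1 ^ β * z2 ^ α) + ((a : ℂ) + (b : ℂ) * s) = 0 := by
    by_contra hne
    have hl1 : l1 = ((z1 * z2) ^ (α + β) - ((c : ℂ) + (d : ℂ) * s)) /
        ((z1 ^ α * z2 ^ β + z1 ^ β * z2 ^ α) + ((a : ℂ) + (b : ℂ) * s)) := by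
      rw [eq_div_iff hne]
      linear_combination hq1 - hq2
    have hmem : memQ s l1 := by
      rw [hl1, div_eq_mul_inv]
      exact memQ_mul hs2
        (memQ_add hmp (memQ_neg ⟨c, d, rfl⟩))
        (memQ_inv hD hs2 hne (memQ_add hme ⟨a, b, rfl⟩))
    exact hirr l1 hmem hq1
  -- hence the constant terms agree
  have hp : (c : ℂ) + (d : ℂ) * s = (z1 * z2) ^ (α + β) := by
    linear_combination hq1 - hq2 - l1 * he'
  -- now the modulus argument
  set n : ℤ := α + β with hn
  have hnn : 1 < n ∨ n < -1 := by
    rcases lt_abs.mp hab with h | h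
    · left; exact h
    · right; omega
  set w : ℂ := (c : ℂ) + (d : ℂ) * s with hwdef
  have hw0 : w ≠ 0 := hcd
  have hconj : (starRingEnd ℂ) w = (c : ℂ) - (d : ℂ) * s := by
    rw [hwdef, hs]
    simp [map_add, map_mul, Complex.conj_I, Complex.conj_ofReal]
    ring
  have hp' : w = ((starRingEnd ℂ) w) ^ n := by
    rw [hconj, ← hw2]; exact hp
  have habs : ‖w‖ = ‖w‖ ^ n := by
    conv_lhs => rw [hp']
    rw [norm_zpow, Complex.norm_conj]
  have htpos : 0 < ‖w‖ := by
    simpa [norm_pos_iff] using hw0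
  have ht1 : ‖w‖ = 1 := by
    by_contra hne
    have hlog : Real.log ‖w‖ = n * Real.log ‖w‖ := by
      conv_lhs => rw [habs]
      exact Real.log_zpow _ _
    have hfac : ((n : ℝ) - 1) * Real.log ‖w‖ = 0 := by linarith
    have hlz : Real.log ‖w‖ = 0 := by
      rcases mul_eq_zero.mp hfac with h | h
      · exfalso
        have : (n : ℝ) = 1 := by linarith
        have : n = 1 := by exact_mod_cast this
        omega
      · exact h
    rcases Real.log_eq_zero.mp hlz with h | h | h
    · exact absurd h (ne_of_gt htpos)
    · exact hne h
    · linarith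
  -- conj w = w⁻¹
  have hconjinv : (starRingEnd ℂ) w = w⁻¹ := by
    have hmc : w * (starRingEnd ℂ) w = 1 := by
      rw [Complex.mul_conj]
      norm_cast
      rw [Complex.normSq_eq_norm_sq, ht1]; norm_num
    field_simp
    linear_combination hmc
  have hwn : w = w ^ (-n) := by
    rw [zpow_neg, ← inv_zpow, ← hconjinv, ← hp']
  have hw1n : w ^ (1 + n) = 1 := by
    rw [zpow_add₀ hw0, zpow_one]
    nth_rewrite 1 [hwn]
    rw [← zpow_add₀ hw0]
    norm_num
  have hne0 : 1 + n ≠ 0 := by omega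
  refine ⟨(1 + n).natAbs, by omega, ?_⟩
  rw [hv2]
  rcases Int.natAbs_eq (1 + n) with h | h
  · have : w ^ (((1 + n).natAbs : ℤ)) = 1 := by rw [← h]; exact hw1n
    rwa [zpow_natCast] at this
  · have : w ^ (-((1 + n).natAbs : ℤ)) = 1 := by rw [← h]; exact hw1n
    rw [zpow_neg, zpow_natCast, inv_eq_one] at this
    exact this
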